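/- Let A be a finite set, G a group, H ≤ G a subgroup, F ⊆ H a finite subset and L ⊆ A^F. Let X ⊆ A^G and Y ⊆ A^H be the SFTs defined by (F, L) on G and on H respectively, and assume both X and Y are nonempty. Then for every g ∈ G, g belongs to Free(X) if and only if Cl(g) ∩ R_G(Free(Y)) ≠ ∅, i.e. if and only if there exist t ∈ G and an integer n > 0 such that (t g t⁻¹)^n lies in Free(Y). -/

import Mathlib

variable {G A : Type*}

/-- The left shift action of a group on configurations: `(shift g x) h = x (g⁻¹ * h)`. -/
def shift [Group G] (g : G) (x : G → A) : G → A := fun h => x (g⁻¹ * h)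

/-- The subshift of finite type on `G` defined by the shape `F` and the pattern set `L`:
all configurations `x` such that for every `g`, the restriction of `g • x` to `F` lies in `L`. -/
def SFT [Group G] (F : Set G) (L : Set (F → A)) : Set (G → A) :=
  {x | ∀ g : G, (fun f : F => shift g x f) ∈ L}

/-- The subshift of finite type on the subgroup `H` defined by the shape `F ⊆ H`
and the pattern set `L`. -/
def SFTon [Group G] (H : Subgroup G) (F : Set G) (hF : F ⊆ (H : Set G)) (L : Set (F → A)) :
    Set (↥H → A) :=
  {y | ∀ h : ↥H, (fun f : F => y (h⁻¹ * ⟨(f : G), hF f.2⟩)) ∈ L}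

/-- The free part of a subshift: elements acting freely on every configuration. -/
def freePart [Group G] (X : Set (G → A)) : Set G := {g | ∀ x ∈ X, shift g x ≠ x}

private lemma shift_shift [Group G] (a b : G) (x : G → A) :
    shift a (shift b x) = shift (a * b) x := by
  funext h; simp [shift, mul_assoc]

private lemma shift_mem_SFT [Group G] {F : Set G} {L : Set (F → A)} {x : G → A}
    (hx : x ∈ SFT F L) (a : G) : shift a x ∈ SFT F L := by
  intro g
  have h : (fun f : F => shift g (shift a x) f) = fun f : F => shift (g * a) x f := by
    funext f; rw [shift_shift]
  rw [h]; exact hx (g * a)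

private lemma restrict_mem_SFTon [Group G] (H : Subgroup G) {F : Set G}
    (hF : F ⊆ (H : Set G)) {L : Set (F → A)} {x : G → A} (hx : x ∈ SFT F L) :
    (fun h : ↥H => x h) ∈ SFTon H F hF L := by
  intro h
  have e : (fun f : F => x (((h⁻¹ * ⟨(f : G), hF f.2⟩ : ↥H) : G)))
      = fun f : F => shift (h : G) x f := by
    funext f; simp [shift]
  exact e ▸ hx (h : G)

private lemma fix_zpow {K : Type*} [Group K] (y : K → A) (k : K)
    (hy : ∀ h, y (k⁻¹ * h) = y h) (q : ℤ) (h : K) : y (k ^ q * h) = y h := by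
  have hy' : ∀ h, y (k * h) = y h := fun h => by
    have := hy (k * h); rw [inv_mul_cancel_left] at this; exact this.symm
  induction q using Int.induction_on generalizing h with
  | zero => simp
  | succ n ih =>
      rw [zpow_add_one, mul_assoc]
      rw [show (k : K) ^ (n : ℤ) * (k * h) = k ^ (n : ℤ) * (k * h) from rfl] at *
      rw [← mul_assoc]
      have : y (k ^ (n : ℤ) * k * h) = y (k ^ (n : ℤ) * (k * h)) := by rw [mul_assoc]
      rw [this, ih (k * h), hy' h]
  | pred n ih =>
      rw [zpow_sub_one, mul_assoc]
      rw [ih (k⁻¹ * h), hy h]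

private lemma conj_zpow' [Group G] (σ g : G) (a q : ℤ) :
    (σ⁻¹ * g ^ a * σ) ^ q = σ⁻¹ * g ^ (a * q) * σ := by
  have := conj_zpow (i := q) (a := σ⁻¹) (b := g ^ a)
  rw [inv_inv] at this
  rw [this, zpow_mul]

private lemma conj_mul' [Group G] (σ g : G) (a b : ℤ) :
    (σ⁻¹ * g ^ a * σ) * (σ⁻¹ * g ^ b * σ) = σ⁻¹ * g ^ (a + b) * σ := by
  rw [zpow_add]; group

/-- For nonempty SFTs `X` on `G` and `Y` on `H` defined by the same data
`(F, L)`, an element `g ∈ G` lies in the free part of `X` iff some conjugate of `g` has a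
positive power lying in the free part of `Y`. -/
theorem mem_freePart_iff_conj_root_mem_freePart
    [Group G] [Finite A] (H : Subgroup G) (F : Set G) (hFfin : F.Finite)
    (hF : F ⊆ (H : Set G)) (L : Set (F → A))
    (hX : (SFT F L).Nonempty) (hY : (SFTon H F hF L).Nonempty) (g : G) :
    g ∈ freePart (SFT F L) ↔
      ∃ t : G, ∃ n : ℕ, 0 < n ∧
        ∃ k : ↥H, (k : G) = (t * g * t⁻¹) ^ n ∧ k ∈ freePart (SFTon H F hF L) := by
  classical
  constructor
  · -- hard direction
    intro hg
    by_contra hcon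
    push_neg at hcon
    obtain ⟨y0, hy0⟩ := hY
    -- turn hcon into a usable form
    have hfix : ∀ σ : G, ∀ n : ℕ, 0 < n → ∀ hmem : σ⁻¹ * g ^ (n : ℤ) * σ ∈ H,
        ∃ y ∈ SFTon H F hF L,
          shift (⟨σ⁻¹ * g ^ (n : ℤ) * σ, hmem⟩ : ↥H) y = y := by
      intro σ n hn hmem
      have hcoe : ((⟨σ⁻¹ * g ^ (n : ℤ) * σ, hmem⟩ : ↥H) : G) = (σ⁻¹ * g * σ⁻¹⁻¹) ^ n := by
        rw [inv_inv]
        show σ⁻¹ * g ^ (n : ℤ) * σ = (σ⁻¹ * g * σ) ^ n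
        have hcz := conj_zpow' σ g 1 (n : ℤ)
        simp only [zpow_one, one_mul] at hcz
        rw [← zpow_natCast (σ⁻¹ * g * σ) n, hcz]
      have := hcon σ⁻¹ n hn ⟨σ⁻¹ * g ^ (n : ℤ) * σ, hmem⟩ hcoe
      simp only [freePart, Set.mem_setOf_eq, not_forall] at this
      obtain ⟨y, hyY, hyfix⟩ := this
      exact ⟨y, hyY, not_not.mp hyfix⟩
    -- key: for each σ, a configuration on H invariant under every conjugate power landing in H
    have key : ∀ σ : G, ∃ y : ↥H → A, y ∈ SFTon H F hF L ∧
        ∀ (d : ℤ) (hd : σ⁻¹ * g ^ d * σ ∈ H) (h : ↥H),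
          y (⟨σ⁻¹ * g ^ d * σ, hd⟩ * h) = y h := by
      intro σ
      by_cases hP : ∃ n : ℕ, 0 < n ∧ σ⁻¹ * g ^ (n : ℤ) * σ ∈ H
      · obtain ⟨hn0, hnH⟩ := Nat.find_spec hP
        set n := Nat.find hP with hn_def
        obtain ⟨y, hyY, hyfix⟩ := hfix σ n hn0 hnH
        refine ⟨y, hyY, ?_⟩
        intro d hd h
        -- every such d is a multiple of n
        have hmem_of : ∀ e : ℤ, σ⁻¹ * g ^ e * σ ∈ H → σ⁻¹ * g ^ (e - (n : ℤ) * (e / (n : ℤ))) * σ ∈ H := by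
          intro e he
          have h1 : σ⁻¹ * g ^ ((n : ℤ) * (e / (n : ℤ))) * σ ∈ H := by
            have := conj_zpow' σ g (n : ℤ) (e / (n : ℤ))
            rw [← this]
            exact H.zpow_mem hnH _
          have := H.mul_mem he (H.inv_mem h1)
          have h2 : (σ⁻¹ * g ^ e * σ) * (σ⁻¹ * g ^ ((n : ℤ) * (e / (n : ℤ))) * σ)⁻¹
              = σ⁻¹ * g ^ (e - (n : ℤ) * (e / (n : ℤ))) * σ := by
            rw [zpow_sub]; group
          rwa [h2] at this
        have hr : σ⁻¹ * g ^ (d % (n : ℤ)) * σ ∈ H := by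
          rw [Int.emod_def]
          exact hmem_of d hd
        have hr0 : d % (n : ℤ) = 0 := by
          by_contra hne
          have hnnz : (n : ℤ) ≠ 0 := by exact_mod_cast hn0.ne'
          have hge : 0 ≤ d % (n : ℤ) := Int.emod_nonneg d hnnz
          have hlt : d % (n : ℤ) < n := Int.emod_lt_of_pos d (by exact_mod_cast hn0)
          have hpos : 0 < (d % (n : ℤ)).toNat := by omega
          have hltn : (d % (n : ℤ)).toNat < n := by omega
          have : σ⁻¹ * g ^ (((d % (n : ℤ)).toNat : ℤ)) * σ ∈ H := by
            rwa [Int.toNat_of_nonneg hge]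
          exact Nat.find_min hP hltn ⟨hpos, this⟩
        have hdiv : d = (n : ℤ) * (d / (n : ℤ)) := by
          have := Int.emod_add_mul_ediv d (n : ℤ)
          omega
        -- rewrite the subtype element as a power of k
        set k : ↥H := ⟨σ⁻¹ * g ^ (n : ℤ) * σ, hnH⟩ with hk_def
        have hkq : (⟨σ⁻¹ * g ^ d * σ, hd⟩ : ↥H) = k ^ (d / (n : ℤ)) := by
          apply Subtype.ext
          push_cast [hk_def]
          rw [conj_zpow' σ g (n : ℤ) (d / (n : ℤ)), ← hdiv]
        have hyfix' : ∀ h : ↥H, y (k⁻¹ * h) = y h := by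
          intro h
          have := congrFun hyfix h
          simpa [shift] using this
        rw [hkq]
        exact fix_zpow y k hyfix' _ h
      · refine ⟨y0, hy0, ?_⟩
        intro d hd h
        have hd0 : d = 0 := by
          by_contra hdne
          rcases lt_or_gt_of_ne hdne with hneg | hpos
          · refine hP ⟨(-d).toNat, by omega, ?_⟩
            rw [Int.toNat_of_nonneg (by omega : (0:ℤ) ≤ -d)]
            have : (σ⁻¹ * g ^ d * σ)⁻¹ = σ⁻¹ * g ^ (-d) * σ := by
              rw [zpow_neg]; group
            exact this ▸ H.inv_mem hd
          · refine hP ⟨d.toNat, by omega, ?_⟩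
            rwa [Int.toNat_of_nonneg (by omega : (0:ℤ) ≤ d)]
        have : (⟨σ⁻¹ * g ^ d * σ, hd⟩ : ↥H) = 1 := by
          apply Subtype.ext
          simp [hd0]
        rw [this, one_mul]
    choose Ysel hYselY hYselInv using key
    -- the setoid of double cosets ⟨g⟩ \ G / H
    let r : G → G → Prop := fun u v => ∃ m : ℤ, ∃ h : ↥H, v = g ^ m * u * (h : G)
    have hr_refl : ∀ u, r u u := fun u => ⟨0, 1, by simp⟩
    have hr_symm : ∀ {u v}, r u v → r v u := by
      rintro u v ⟨m, h, rfl⟩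
      exact ⟨-m, h⁻¹, by push_cast; group⟩
    have hr_trans : ∀ {u v w}, r u v → r v w → r u w := by
      rintro u v w ⟨m, h, rfl⟩ ⟨m', h', rfl⟩
      exact ⟨m' + m, h * h', by push_cast [zpow_add]; group⟩
    let S : Setoid G := ⟨r, ⟨hr_refl, hr_symm, hr_trans⟩⟩
    let s : G → G := fun u => (Quotient.mk S u).out
    have hsu : ∀ u, r (s u) u := fun u => Quotient.exact ((Quotient.mk S u).out_eq)
    have hs_eq : ∀ u v, r u v → s u = s v := fun u v h =>
      congrArg Quotient.out (Quotient.sound h)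
    have dec : ∀ u : G, ∃ m : ℤ, ∃ h : ↥H, u = g ^ m * s u * (h : G) := fun u => hsu u
    choose mm hh hspec using dec
    -- well-definedness
    have welldef : ∀ (σ : G) (m m' : ℤ) (h h' : ↥H),
        g ^ m * σ * (h : G) = g ^ m' * σ * (h' : G) → Ysel σ h = Ysel σ h' := by
      intro σ m m' h h' heq
      have e1 : σ⁻¹ * g ^ (m - m') * σ * (h : G) = (h' : G) := by
        rw [zpow_sub]
        calc σ⁻¹ * (g ^ m * (g ^ m')⁻¹) * σ * (h : G)
            = (g ^ m' * σ)⁻¹ * (g ^ m * σ * (h : G)) := by group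
          _ = (g ^ m' * σ)⁻¹ * (g ^ m' * σ * (h' : G)) := by rw [heq]
          _ = (h' : G) := by group
      have hc : σ⁻¹ * g ^ (m - m') * σ = (h' : G) * (h : G)⁻¹ := by
        rw [← e1]; group
      have hcH : σ⁻¹ * g ^ (m - m') * σ ∈ H := by
        rw [hc]; exact H.mul_mem h'.2 (H.inv_mem h.2)
      have hinv := hYselInv σ (m - m') hcH h
      have he : (⟨σ⁻¹ * g ^ (m - m') * σ, hcH⟩ : ↥H) * h = h' := by
        apply Subtype.ext
        push_cast
        exact e1
      rw [he] at hinv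
      exact hinv.symm
    -- the invariant configuration
    set x : G → A := fun u => Ysel (s u) (hh u) with hx_def
    -- x is in the SFT
    have hxX : x ∈ SFT F L := by
      intro g₀
      set u : G := g₀⁻¹ with hu_def
      have hval : ∀ f : F, x (u * f) = Ysel (s u) (hh u * ⟨(f : G), hF f.2⟩) := by
        intro f
        have hclass : s (u * (f : G)) = s u := by
          apply hs_eq
          exact ⟨0, (⟨(f : G), hF f.2⟩ : ↥H)⁻¹, by push_cast; group⟩
        have e1 := hspec (u * (f : G))
        rw [hclass] at e1
        have e2 : g ^ (mm u) * s u * ((hh u * ⟨(f : G), hF f.2⟩ : ↥H) : G) = u * (f : G) := by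
          push_cast
          rw [← mul_assoc, ← hspec u]
        show Ysel (s (u * (f : G))) (hh (u * (f : G))) = _
        rw [hclass]
        exact welldef (s u) _ _ _ _ (by rw [← e1, e2])
      have hmemL := hYselY (s u) (hh u)⁻¹
      rw [inv_inv] at hmemL
      have e : (fun f : F => shift g₀ x f) = fun f : F => Ysel (s u) (hh u * ⟨(f : G), hF f.2⟩) := by
        funext f
        show x (g₀⁻¹ * f) = _
        rw [← hu_def]
        exact hval f
      rw [e]
      exact hmemL
    -- x is fixed by g
    have hxfix : shift g x = x := by
      funext u
      show x (g⁻¹ * u) = x u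
      have hclass : s (g⁻¹ * u) = s u := by
        apply hs_eq
        exact ⟨1, 1, by push_cast; group⟩
      have e1 := hspec (g⁻¹ * u)
      rw [hclass] at e1
      have e2 : g ^ (mm (g⁻¹ * u) + 1) * s u * ((hh (g⁻¹ * u)) : G) = u := by
        have : g ^ (mm (g⁻¹ * u) + 1) * s u * ((hh (g⁻¹ * u)) : G)
            = g * (g ^ (mm (g⁻¹ * u)) * s u * ((hh (g⁻¹ * u)) : G)) := by
          rw [zpow_add_one]; group
        rw [this, ← e1]; group
      show Ysel (s (g⁻¹ * u)) (hh (g⁻¹ * u)) = Ysel (s u) (hh u)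
      rw [hclass]
      exact welldef (s u) _ _ _ _ (by rw [e2, ← hspec u])
    exact hg x hxX hxfix
  · -- easy direction
    rintro ⟨t, n, hn, k, hk, hkfree⟩
    intro x hx hxg
    set x' : G → A := shift t x with hx'_def
    have hx'X : x' ∈ SFT F L := shift_mem_SFT hx t
    have hfix1 : shift (t * g * t⁻¹) x' = x' := by
      rw [hx'_def, shift_shift]
      have : t * g * t⁻¹ * t = t * g := by group
      rw [this, ← shift_shift, hxg]
    have hfixn : ∀ m : ℕ, shift ((t * g * t⁻¹) ^ m) x' = x' := by
      intro m
      induction m with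
      | zero => funext u; simp [shift]
      | succ m ih =>
          rw [pow_succ, ← shift_shift, hfix1, ih]
    set y : ↥H → A := fun h => x' (h : G) with hy_def
    have hyY : y ∈ SFTon H F hF L := restrict_mem_SFTon H hF hx'X
    have hyfix : shift k y = y := by
      funext h
      show y (k⁻¹ * h) = y h
      have : y (k⁻¹ * h) = x' (((k : G))⁻¹ * (h : G)) := by
        rw [hy_def]; push_cast; rfl
      rw [this, hk]
      have := congrFun (hfixn n) ((h : G))
      exact this
    exact hkfree y hyY hyfix
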